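/- Let Y be a real normed space and A ⊂ Y a nonempty closed convex cone with A ≠ Y (equivalently A* ≠ {0}), and let e ∈ Y. Then e ∈ int(A) if and only if inf { y*(e) : y* ∈ S_{Y*} ∩ A* } > 0. Consequently, int(A) ≠ ∅ if and only if 0 ∉ the weak-star closed convex hull of S_{Y*} ∩ A*. -/

import Mathlib

open Topology Filter Set

noncomputable section

section Defs

variable {E : Type*} [AddCommGroup E] [Module ℝ E] [TopologicalSpace E]

/-- The canonical map from the topological dual of `E` to the weak-star dual. -/
def toWD (φ : E →L[ℝ] ℝ) : WeakDual ℝ E := φ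

/-- The weak-star closed convex hull of a set of continuous linear functionals. -/
def wcch (B : Set (E →L[ℝ] ℝ)) : Set (WeakDual ℝ E) :=
  closure (convexHull ℝ (toWD '' B))

/-- `f` is Gateaux differentiable at `x` with Gateaux-differential `f'`. -/
def HasGateauxAt (f : E → ℝ) (f' : E →L[ℝ] ℝ) (x : E) : Prop :=
  ∀ v : E, Tendsto (fun t : ℝ => (f (x + t • v) - f x - t * f' v) / t) (𝓝[>] 0) (𝓝 0)

/-- The family `C` is equi-Gateaux differentiable at `x`, with differentials given by `D`. -/
def EquiGateauxAt (C : Set (E → ℝ)) (D : (E → ℝ) → E →L[ℝ] ℝ) (x : E) : Prop :=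
  (∀ φ ∈ C, HasGateauxAt φ (D φ) x) ∧
  ∀ v : E, ∀ ε : ℝ, 0 < ε → ∃ δ : ℝ, 0 < δ ∧ ∀ t : ℝ, 0 < t → t < δ →
    ∀ φ ∈ C, |(φ (x + t • v) - φ x - t * (D φ) v) / t| ≤ ε

/-- The family `C` is equi-lower semicontinuous at `x`. -/
def EquiLscAt (C : Set (E → ℝ)) (x : E) : Prop :=
  ∀ ε : ℝ, 0 < ε → ∃ O ∈ 𝓝 x, ∀ y ∈ O, ∀ φ ∈ C, φ y - φ x > -ε

/-- `[C]^× = {x ∈ E : φ(x) ≥ 0 for all φ ∈ C}`. -/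
def polarSet (C : Set (E → ℝ)) : Set E := {x | ∀ φ ∈ C, 0 ≤ φ x}

/-- The multiplier set `T_C(x̂)`. -/
def multSet (C : Set (E → ℝ)) (D : (E → ℝ) → E →L[ℝ] ℝ) (x : E) : Set (WeakDual ℝ E) :=
  ⋂ n ∈ {n : ℕ | 1 ≤ n}, wcch (D '' {φ | φ ∈ C ∧ φ x ∈ Icc (0:ℝ) (1/(n:ℝ))})

/-- `F` is weak-admissible at `x ∈ F`, determined by `C` (with differentials `D`). -/
def WeakAdmissibleAt (F : Set E) (C : Set (E → ℝ)) (D : (E → ℝ) → E →L[ℝ] ℝ) (x : E) : Prop :=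
  x ∈ F ∧ C.Nonempty ∧ F = polarSet C ∧ EquiGateauxAt C D x ∧
    ({φ | φ ∈ C ∧ φ x ≠ 0} = ∅ ∨ EquiLscAt {φ | φ ∈ C ∧ φ x ≠ 0} x) ∧
    IsCompact (wcch (D '' C))

end Defs

section NormedDefs

variable {Y : Type*} [NormedAddCommGroup Y] [NormedSpace ℝ Y]

/-- `A` is admissible at `x ∈ A`, determined by `C` (with differentials `D`). -/
def AdmissibleAt (A : Set Y) (C : Set (Y → ℝ)) (D : (Y → ℝ) → Y →L[ℝ] ℝ) (x : Y) : Prop :=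
  x ∈ A ∧ C.Nonempty ∧ A = polarSet C ∧ EquiGateauxAt C D x ∧
    (∃ r : NNReal, ∃ ε : ℝ, 0 < ε ∧ ∀ φ ∈ C, LipschitzOnWith r φ (Metric.ball x ε)) ∧
    toWD (0 : Y →L[ℝ] ℝ) ∉ wcch (D '' C)

/-- The recession cone of a set. -/
def recCone (K : Set Y) : Set Y := {v | ∀ l : ℝ, 0 < l → ∀ x ∈ K, x + l • v ∈ K}

/-- The barrier cone of `K`: functionals bounded above on `K`. -/
def barCone (K : Set Y) : Set (Y →L[ℝ] ℝ) := {φ | BddAbove (φ '' K)}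

/-- The dual positive cone `A*`. -/
def posDualCone (A : Set Y) : Set (Y →L[ℝ] ℝ) := {φ | ∀ y ∈ A, 0 ≤ φ y}

end NormedDefs



section Aux
variable {Y : Type*} [NormedAddCommGroup Y] [NormedSpace ℝ Y]

lemma zero_mem_of_cone' {A : Set Y} (hne : A.Nonempty) (hcl : IsClosed A)
    (hcone : ∀ c : ℝ, 0 < c → ∀ x ∈ A, c • x ∈ A) : (0:Y) ∈ A := by
  obtain ⟨x, hx⟩ := hne
  have ht : Tendsto (fun c : ℝ => c • x) (𝓝[>] 0) (𝓝 (0:Y)) := by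
    have : Tendsto (fun c : ℝ => c • x) (𝓝 0) (𝓝 ((0:ℝ) • x)) :=
      (continuous_id.smul continuous_const).tendsto 0
    simpa using this.mono_left nhdsWithin_le_nhds
  refine hcl.mem_of_tendsto ht ?_
  filter_upwards [self_mem_nhdsWithin] with c hc
  exact hcone c hc x hx

lemma sep_lemma {A : Set Y} (hne : A.Nonempty) (hcl : IsClosed A) (hconv : Convex ℝ A)
    (hcone : ∀ c : ℝ, 0 < c → ∀ x ∈ A, c • x ∈ A) {z : Y} (hz : z ∉ A) :
    ∃ φ : Y →L[ℝ] ℝ, ‖φ‖ = 1 ∧ (∀ y ∈ A, 0 ≤ φ y) ∧ φ z < 0 := by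
  obtain ⟨f, u, hfz, hb⟩ := geometric_hahn_banach_point_closed hconv hcl hz
  have h0 : (0:Y) ∈ A := zero_mem_of_cone' ⟨hne.some, hne.some_mem⟩ hcl hcone
  have hu0 : u < 0 := by simpa using hb 0 h0
  have hpos : ∀ y ∈ A, 0 ≤ f y := by
    intro y hy
    by_contra hneg
    push_neg at hneg
    have hcpos : 0 < (2*u) / f y := div_pos_of_neg_of_neg (by linarith) hneg
    have h2 := hb (((2*u)/f y) • y) (hcone _ hcpos y hy)
    rw [map_smul] at h2
    simp only [smul_eq_mul] at h2
    rw [div_mul_cancel₀ _ hneg.ne] at h2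
    linarith
  have hfz0 : f z < 0 := lt_trans hfz hu0
  have hfne : f ≠ 0 := by
    intro h; rw [h] at hfz0; simp at hfz0
  have hnorm : (0:ℝ) < ‖f‖ := norm_pos_iff.mpr hfne
  refine ⟨‖f‖⁻¹ • f, ?_, ?_, ?_⟩
  · rw [norm_smul (‖f‖⁻¹) f]; simp [inv_mul_cancel₀ hnorm.ne']
  · intro y hy
    simp only [ContinuousLinearMap.coe_smul', Pi.smul_apply, smul_eq_mul]
    exact mul_nonneg (inv_nonneg.mpr hnorm.le) (hpos y hy)
  · simp only [ContinuousLinearMap.coe_smul', Pi.smul_apply, smul_eq_mul]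
    exact mul_neg_of_pos_of_neg (inv_pos.mpr hnorm) hfz0

end Aux

section Dual
variable {Y : Type*} [NormedAddCommGroup Y] [NormedSpace ℝ Y]

/-- Evaluation at `y` as a linear map on the weak-star dual. -/
def evalLM (y : Y) : WeakDual ℝ Y →ₗ[ℝ] ℝ where
  toFun ψ := ψ y
  map_add' _ _ := rfl
  map_smul' _ _ := rfl

lemma weakdual_clm_eq_eval (f : WeakDual ℝ Y →L[ℝ] ℝ) :
    ∃ e : Y, ∀ ψ : WeakDual ℝ Y, f ψ = ψ e := by
  have h1 : f ⁻¹' (Metric.ball (0:ℝ) 1) ∈ 𝓝 (0 : WeakDual ℝ Y) := by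
    have := f.continuous.continuousAt (x := 0)
    have hb : Metric.ball (0:ℝ) 1 ∈ 𝓝 (f 0) := by
      rw [map_zero]; exact Metric.ball_mem_nhds _ one_pos
    exact this.preimage_mem_nhds hb
  have e := nhds_induced (fun (ψ : WeakDual ℝ Y) (y : Y) => ψ y) (0 : WeakDual ℝ Y)
  replace h1 : f ⁻¹' (Metric.ball (0:ℝ) 1) ∈ Filter.comap (fun (ψ : WeakDual ℝ Y) (y : Y) => ψ y) (𝓝 fun y => (0 : WeakDual ℝ Y) y) := by
    rw [← e]; exact h1
  obtain ⟨U, hU, hUsub⟩ := h1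
  rw [nhds_pi] at hU
  obtain ⟨I, hI, V, hV, hVs⟩ := Filter.mem_pi.mp hU
  have key : ∀ ψ : WeakDual ℝ Y, (∀ y ∈ I, ψ y = 0) → f ψ = 0 := by
    intro ψ hker
    by_contra hfψ
    have hc : ∀ c : ℝ, |f (c • ψ)| < 1 := by
      intro c
      have hmem : (fun y => (c • ψ) y) ∈ I.pi V := by
        intro y hy
        have : (c • ψ) y = 0 := by
          show c * ψ y = 0
          rw [hker y hy, mul_zero]
        show (c • ψ) y ∈ V y
        rw [this]
        have := mem_of_mem_nhds (hV y)
        exact this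
      have := hUsub (hVs hmem)
      simp only [Set.mem_preimage, Metric.mem_ball, Real.dist_eq, sub_zero] at this
      exact this
    have := hc (2 / |f ψ|)
    rw [map_smul, smul_eq_mul, abs_mul, abs_div] at this
    have habs : 0 < |f ψ| := abs_pos.mpr hfψ
    rw [abs_abs, abs_two, div_mul_cancel₀ _ habs.ne'] at this
    linarith
  haveI : Finite ↥I := hI.to_subtype
  haveI : Fintype ↥I := Fintype.ofFinite _
  have hker : ⨅ i : I, LinearMap.ker (evalLM (i : Y)) ≤ LinearMap.ker (f : WeakDual ℝ Y →ₗ[ℝ] ℝ) := by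
    intro ψ hψ
    rw [Submodule.mem_iInf] at hψ
    exact key ψ fun y hy => hψ ⟨y, hy⟩
  have hspan := mem_span_of_iInf_ker_le_ker (L := fun i : I => evalLM (i : Y)) hker
  obtain ⟨c, hc⟩ := (Submodule.mem_span_range_iff_exists_fun ℝ).1 hspan
  refine ⟨∑ i : I, c i • (i : Y), fun ψ => ?_⟩
  have := LinearMap.congr_fun hc ψ
  simp only [LinearMap.coe_sum, Finset.sum_apply, LinearMap.smul_apply, smul_eq_mul] at this
  rw [ContinuousLinearMap.coe_coe] at this
  rw [← this, map_sum]
  congr 1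
  ext i
  rw [map_smul, smul_eq_mul]
  rfl

end Dual

instance wdLCS {Y : Type*} [NormedAddCommGroup Y] [NormedSpace ℝ Y] : LocallyConvexSpace ℝ (WeakDual ℝ Y) :=
  WeakBilin.locallyConvexSpace (B := topDualPairing ℝ Y)

/-- For a nonempty closed convex cone `A ≠ Y` in a real normed space `Y`:
`e ∈ int(A)` iff `inf {y*(e) : y* ∈ S_{Y*} ∩ A*} > 0`; consequently `int(A) ≠ ∅` iff
`0` is not in the weak-star closed convex hull of `S_{Y*} ∩ A*`. -/
theorem interior_cone_characterization
    {Y : Type*} [NormedAddCommGroup Y] [NormedSpace ℝ Y]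
    (A : Set Y) (hne : A.Nonempty) (hcl : IsClosed A) (hconv : Convex ℝ A)
    (hcone : ∀ c : ℝ, 0 < c → ∀ x ∈ A, c • x ∈ A) (hA : A ≠ Set.univ) :
    (∀ e : Y, e ∈ interior A ↔
      0 < sInf ((fun φ : Y →L[ℝ] ℝ => φ e) '' {φ | ‖φ‖ = 1 ∧ φ ∈ posDualCone A})) ∧
    ((interior A).Nonempty ↔
      toWD (0 : Y →L[ℝ] ℝ) ∉ wcch {φ : Y →L[ℝ] ℝ | ‖φ‖ = 1 ∧ φ ∈ posDualCone A}) := by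
  set S : Set (Y →L[ℝ] ℝ) := {φ | ‖φ‖ = 1 ∧ φ ∈ posDualCone A} with hSdef
  obtain ⟨z, hz⟩ : ∃ z, z ∉ A := by
    by_contra h; push_neg at h; exact hA (Set.eq_univ_of_forall h)
  obtain ⟨φ₀, hφ₀n, hφ₀p, -⟩ := sep_lemma hne hcl hconv hcone hz
  have hSne : S.Nonempty := ⟨φ₀, hφ₀n, hφ₀p⟩
  have hbdd : ∀ e : Y, BddBelow ((fun φ : Y →L[ℝ] ℝ => φ e) '' S) := by
    intro e
    refine ⟨-‖e‖, ?_⟩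
    rintro - ⟨φ, hφ, rfl⟩
    have h1 := φ.le_opNorm e
    rw [hφ.1, one_mul, Real.norm_eq_abs] at h1
    linarith [(abs_le.mp h1).1]
  have key : ∀ e : Y, e ∈ interior A ↔
      0 < sInf ((fun φ : Y →L[ℝ] ℝ => φ e) '' S) := by
    intro e
    constructor
    · intro he
      obtain ⟨r, hr, hball⟩ := Metric.isOpen_iff.mp isOpen_interior e he
      have hlb : ∀ φ ∈ S, r / 4 ≤ φ e := by
        rintro φ ⟨hφn, hφp⟩
        have h12 : (1:ℝ)/2 < ‖φ‖ := by rw [hφn]; norm_num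
        obtain ⟨u, hu1, hu2⟩ := φ.exists_lt_apply_of_lt_opNorm h12
        rw [Real.norm_eq_abs] at hu2
        have hmem : ∀ v : Y, ‖v‖ < 1 → e - (r/2) • v ∈ A := by
          intro v hv
          have : e - (r/2) • v ∈ Metric.ball e r := by
            rw [Metric.mem_ball, dist_eq_norm]
            have : ‖e - (r/2) • v - e‖ = (r/2) * ‖v‖ := by
              rw [sub_sub_cancel_left, norm_neg, norm_smul, Real.norm_eq_abs,
                abs_of_pos (by linarith)]
            rw [this]
            nlinarith
          exact interior_subset (hball this)
        rcases lt_or_ge (φ u) 0 with hneg | hpos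
        · have h3 : 1/2 < -(φ u) := by rcases abs_cases (φ u) with h | h <;> linarith [h.1]
          have := hφp _ (hmem (-u) (by rwa [norm_neg]))
          rw [map_sub, map_smul, smul_eq_mul, map_neg] at this
          nlinarith
        · have h3 : 1/2 < φ u := by rcases abs_cases (φ u) with h | h <;> linarith [h.1]
          have := hφp _ (hmem u hu1)
          rw [map_sub, map_smul, smul_eq_mul] at this
          nlinarith
      have : r / 4 ≤ sInf ((fun φ : Y →L[ℝ] ℝ => φ e) '' S) := by
        refine le_csInf (hSne.image _) ?_
        rintro - ⟨φ, hφ, rfl⟩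
        exact hlb φ hφ
      linarith
    · intro hm
      set m := sInf ((fun φ : Y →L[ℝ] ℝ => φ e) '' S) with hmdef
      have hsub : Metric.ball e m ⊆ A := by
        intro w hw
        by_contra hw'
        obtain ⟨φ, hφn, hφp, hφw⟩ := sep_lemma hne hcl hconv hcone hw'
        have hle : m ≤ φ e := csInf_le (hbdd e) ⟨φ, ⟨hφn, hφp⟩, rfl⟩
        have h1 : |φ (w - e)| ≤ ‖w - e‖ := by
          have := φ.le_opNorm (w - e)
          rwa [hφn, one_mul, Real.norm_eq_abs] at this
        have h2 : ‖w - e‖ < m := by rwa [Metric.mem_ball, dist_eq_norm] at hw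
        have h3 : φ w = φ e + φ (w - e) := by rw [← map_add]; congr 1; abel
        have := (abs_le.mp h1).1
        linarith
      exact mem_interior_iff_mem_nhds.mpr
        (Filter.mem_of_superset (Metric.ball_mem_nhds e hm) hsub)
  refine ⟨key, ?_, ?_⟩
  · rintro ⟨e, he⟩ h0mem
    have hm := (key e).1 he
    set m := sInf ((fun φ : Y →L[ℝ] ℝ => φ e) '' S) with hmdef
    set H : Set (WeakDual ℝ Y) := {ψ : WeakDual ℝ Y | m ≤ ψ e} with hHdef
    have hHcl : IsClosed H := (isClosed_Ici).preimage (WeakDual.eval_continuous e)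
    have hHconv : Convex ℝ H := by
      intro ψ hψ χ hχ a b ha hb hab
      have : (a • ψ + b • χ) e = a * ψ e + b * χ e := rfl
      show m ≤ (a • ψ + b • χ) e
      rw [this]
      have hψ' : m ≤ ψ e := hψ
      have hχ' : m ≤ χ e := hχ
      nlinarith
    have himg : toWD '' S ⊆ H := by
      rintro - ⟨φ, hφ, rfl⟩
      show m ≤ φ e
      exact csInf_le (hbdd e) ⟨φ, hφ, rfl⟩
    have hwcch : wcch S ⊆ H := closure_minimal (convexHull_min himg hHconv) hHcl
    have : m ≤ (toWD (0 : Y →L[ℝ] ℝ)) e := hwcch h0mem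
    have h0 : (toWD (0 : Y →L[ℝ] ℝ)) e = 0 := rfl
    rw [h0] at this
    linarith
  · intro h0
    have hKconv : Convex ℝ (wcch S) := (convex_convexHull ℝ _).closure
    have hKcl : IsClosed (wcch S) := isClosed_closure
    obtain ⟨f, u, hfu, hb⟩ := geometric_hahn_banach_point_closed hKconv hKcl h0
    have hf0 : f (toWD (0 : Y →L[ℝ] ℝ)) = 0 := by
      have : toWD (0 : Y →L[ℝ] ℝ) = (0 : WeakDual ℝ Y) := rfl
      rw [this, map_zero]
    rw [hf0] at hfu
    obtain ⟨e, hfe⟩ := weakdual_clm_eq_eval f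
    have hS : ∀ φ ∈ S, u < φ e := by
      intro φ hφ
      have hmem : toWD φ ∈ wcch S :=
        subset_closure (subset_convexHull ℝ _ (Set.mem_image_of_mem _ hφ))
      have := hb _ hmem
      rwa [hfe (toWD φ)] at this
    have : u ≤ sInf ((fun φ : Y →L[ℝ] ℝ => φ e) '' S) := by
      refine le_csInf (hSne.image _) ?_
      rintro - ⟨φ, hφ, rfl⟩
      exact (hS φ hφ).le
    exact ⟨e, (key e).2 (by linarith)⟩
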